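/- Let ι be a finite nonempty index set, let v : ι → ℂ^d be unit vectors, and let p : ι → ℝ satisfy p_i > 0 for all i and ∑_i p_i = 1. Let ρ be the d × d complex matrix ρ = ∑_i p_i · v_i v_i† (the weighted sum of outer products), which is Hermitian, and let μ_1, …, μ_d be its eigenvalues (with multiplicity). If there exist i ≠ j with ⟨v_i, v_j⟩ ≠ 0, then −∑_k μ_k log μ_k < −∑_i p_i log p_i (with the convention 0 log 0 = 0). -/

import Mathlib

open scoped InnerProductSpace

/-- For unit vectors `v i` in `ℂ^d` mixed with strictly positive
weights `p i` summing to 1, if two of the vectors are non-orthogonal then the von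
Neumann entropy of `ρ = ∑ i, p i • |v i⟩⟨v i|` is strictly smaller than the
Shannon entropy of `p`. -/
theorem stmt4 {ι : Type*} [Fintype ι] [Nonempty ι] {d : ℕ}
    (v : ι → EuclideanSpace ℂ (Fin d)) (hv : ∀ i, ‖v i‖ = 1)
    (p : ι → ℝ) (hp : ∀ i, 0 < p i) (hpsum : ∑ i, p i = 1)
    (ρ : Matrix (Fin d) (Fin d) ℂ)
    (hρdef : ρ = ∑ i, (p i : ℂ) • Matrix.of (fun a b => v i a * star (v i b)))
    (hρ : ρ.IsHermitian)
    (hnonorth : ∃ i j : ι, i ≠ j ∧ ⟪v i, v j⟫_ℂ ≠ 0) :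
    -∑ k, hρ.eigenvalues k * Real.log (hρ.eigenvalues k) <
      -∑ i, p i * Real.log (p i) := by
  classical
  obtain ⟨i₀, j₀, hij, hnon⟩ := hnonorth
  set φ : ℝ → ℝ := fun x => x * Real.log x with hφ
  set e := hρ.eigenvectorBasis with he
  set μ := hρ.eigenvalues with hμdef
  -- action of ρ on vectors
  have hmul : ∀ y : EuclideanSpace ℂ (Fin d),
      ρ.mulVec y = ∑ i, ((p i : ℂ) * ⟪v i, y⟫_ℂ) • (v i : Fin d → ℂ) := by
    intro y
    subst hρdef
    ext a
    rw [show (∑ i, ((p i : ℂ) * ⟪v i, y⟫_ℂ) • (v i : Fin d → ℂ)) a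
        = ∑ i, ((p i : ℂ) * ⟪v i, y⟫_ℂ) * v i a from by rw [Finset.sum_apply]; rfl]
    simp only [Matrix.mulVec, dotProduct, PiLp.inner_apply, RCLike.inner_apply,
      Finset.sum_apply, smul_eq_mul, Matrix.of_apply, Matrix.sum_apply,
      Matrix.smul_apply, Finset.sum_mul, Finset.mul_sum]
    rw [Finset.sum_comm]
    exact Finset.sum_congr rfl fun i _ => Finset.sum_congr rfl fun b _ => by
      rw [RCLike.star_def]; ring
  -- sesquilinear form of ρ
  have hform : ∀ x y : EuclideanSpace ℂ (Fin d),
      ∑ a, (starRingEnd ℂ) (x a) * (ρ.mulVec y) a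
        = ∑ i, (p i : ℂ) * (⟪v i, y⟫_ℂ * ⟪x, v i⟫_ℂ) := by
    intro x y
    rw [hmul y]
    calc ∑ a, (starRingEnd ℂ) (x a) * (∑ i, ((p i : ℂ) * ⟪v i, y⟫_ℂ) • (v i : Fin d → ℂ)) a
        = ∑ a, ∑ i, (starRingEnd ℂ) (x a) * (((p i : ℂ) * ⟪v i, y⟫_ℂ) * v i a) := by
          refine Finset.sum_congr rfl fun a _ => ?_
          rw [show (∑ i, ((p i : ℂ) * ⟪v i, y⟫_ℂ) • (v i : Fin d → ℂ)) a
              = ∑ i, ((p i : ℂ) * ⟪v i, y⟫_ℂ) * v i a from by rw [Finset.sum_apply]; rfl]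
          rw [Finset.mul_sum]
      _ = ∑ i, ∑ a, (starRingEnd ℂ) (x a) * (((p i : ℂ) * ⟪v i, y⟫_ℂ) * v i a) :=
          Finset.sum_comm
      _ = ∑ i, (p i : ℂ) * (⟪v i, y⟫_ℂ * ⟪x, v i⟫_ℂ) := by
          refine Finset.sum_congr rfl fun i _ => ?_
          rw [show ⟪x, v i⟫_ℂ = ∑ a, (starRingEnd ℂ) (x a) * v i a from by
            simp [PiLp.inner_apply, RCLike.inner_apply]
            exact Finset.sum_congr rfl fun _ _ => mul_comm _ _]
          rw [Finset.mul_sum, Finset.mul_sum]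
          refine Finset.sum_congr rfl fun a _ => ?_
          ring
  have heval : ∀ (l : Fin d) (a : Fin d), ρ.mulVec (e l) a = (μ l : ℂ) * e l a := by
    intro l a
    have := congr_fun (hρ.mulVec_eigenvectorBasis l) a
    simpa [Complex.real_smul] using this
  -- key spectral identity
  have hkey : ∀ k l : Fin d,
      ∑ i, (p i : ℂ) * (⟪v i, e l⟫_ℂ * ⟪e k, v i⟫_ℂ)
        = (μ l : ℂ) * (if k = l then 1 else 0) := by
    intro k l
    rw [← hform (e k) (e l)]
    have h1 := heval l
    have horth := orthonormal_iff_ite.mp (e.orthonormal) k l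
    rw [PiLp.inner_apply] at horth
    simp only [RCLike.inner_apply] at horth
    rw [← horth, Finset.mul_sum]
    refine Finset.sum_congr rfl fun a _ => ?_
    rw [h1 a]
    ring
  set D : ι → Fin d → ℝ := fun i k => p i * ‖⟪e k, v i⟫_ℂ‖ ^ 2 with hD
  have hDnn : ∀ i k, 0 ≤ D i k := fun i k => mul_nonneg (hp i).le (sq_nonneg _)
  -- column sums give eigenvalues
  have hμeq : ∀ k, ∑ i, D i k = μ k := by
    intro k
    have h := hkey k k
    rw [if_pos rfl, mul_one] at h
    have h2 : ∀ i : ι, (p i : ℂ) * (⟪v i, e k⟫_ℂ * ⟪e k, v i⟫_ℂ) = ((D i k : ℝ) : ℂ) := by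
      intro i
      rw [← inner_conj_symm (v i) (e k), RCLike.conj_mul]
      simp only [hD]
      push_cast
      exact rfl
    rw [Finset.sum_congr rfl fun i _ => h2 i, ← Complex.ofReal_sum] at h
    exact_mod_cast h
  -- row sums give weights
  have hpeq : ∀ i, ∑ k, D i k = p i := by
    intro i
    have h := e.sum_inner_mul_inner (v i) (v i)
    rw [inner_self_eq_norm_sq_to_K, hv i] at h
    have h2 : ∀ k : Fin d, ⟪v i, e k⟫_ℂ * ⟪e k, v i⟫_ℂ = ((‖⟪e k, v i⟫_ℂ‖ ^ 2 : ℝ) : ℂ) := by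
      intro k
      rw [← inner_conj_symm (v i) (e k), RCLike.conj_mul]
      push_cast
      exact rfl
    rw [Finset.sum_congr rfl fun k _ => h2 k, ← Complex.ofReal_sum] at h
    have h3 : ∑ k, ‖⟪e k, v i⟫_ℂ‖ ^ 2 = 1 := by
      have h4 : ((∑ k, ‖⟪e k, v i⟫_ℂ‖ ^ 2 : ℝ) : ℂ) = ((1 : ℝ) : ℂ) := by
        rw [h]; norm_num
      exact Complex.ofReal_injective h4
    simp only [hD, ← Finset.mul_sum, h3, mul_one]
  have hμnn : ∀ k, 0 ≤ μ k := fun k => (hμeq k) ▸ Finset.sum_nonneg fun i _ => hDnn i k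
  have hDle : ∀ i k, D i k ≤ μ k := fun i k => (hμeq k) ▸
    Finset.single_le_sum (fun i _ => hDnn i k) (Finset.mem_univ i)
  set w : ι → Fin d → ℝ := fun i k => if 0 < μ k then D i k / μ k else 0 with hw
  have hwnn : ∀ i k, 0 ≤ w i k := fun i k => by
    simp only [hw]; split_ifs with h
    · exact div_nonneg (hDnn i k) (hμnn k)
    · exact le_refl 0
  have hwμ : ∀ i k, w i k * μ k = D i k := by
    intro i k
    simp only [hw]; split_ifs with h
    · exact div_mul_cancel₀ _ (ne_of_gt h)
    · have h0 : μ k = 0 := le_antisymm (not_lt.mp h) (hμnn k)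
      have hd : D i k = 0 := le_antisymm (h0 ▸ hDle i k) (hDnn i k)
      rw [hd, h0, mul_zero]
  have hcolw : ∀ k, 0 < μ k → ∑ i, w i k = 1 := by
    intro k hk
    rw [hw]; simp only [if_pos hk]
    rw [← Finset.sum_div, hμeq k, div_self (ne_of_gt hk)]
  -- Bessel
  have hbessel : ∀ i, ∑ k, w i k ≤ 1 := by
    intro i
    set u : {k : Fin d // 0 < μ k} → EuclideanSpace ℂ ι := fun k =>
      WithLp.toLp 2 (fun m => ((Real.sqrt (p m) : ℂ) * ⟪v m, e k.1⟫_ℂ) / (Real.sqrt (μ k.1) : ℂ)) with hu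
    have horthu : Orthonormal ℂ u := by
      rw [orthonormal_iff_ite]
      intro k l
      rw [PiLp.inner_apply]
      simp only [RCLike.inner_apply]
      have hterm : ∀ m : ι, (starRingEnd ℂ) (u k m) * u l m
          = ((p m : ℂ) * (⟪v m, e l.1⟫_ℂ * ⟪e k.1, v m⟫_ℂ))
            / ((Real.sqrt (μ k.1) : ℂ) * (Real.sqrt (μ l.1) : ℂ)) := by
        intro m
        simp only [hu, PiLp.toLp_apply, map_div₀, map_mul, Complex.conj_ofReal, inner_conj_symm]
        rw [div_mul_div_comm]
        congr 1
        rw [show ((Real.sqrt (p m) : ℂ)) * ⟪e k.1, v m⟫_ℂ * (((Real.sqrt (p m) : ℂ)) * ⟪v m, e l.1⟫_ℂ)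
            = (((Real.sqrt (p m) * Real.sqrt (p m) : ℝ)) : ℂ) * (⟪v m, e l.1⟫_ℂ * ⟪e k.1, v m⟫_ℂ) from by
          push_cast; ring]
        rw [Real.mul_self_sqrt (hp m).le]
      rw [Finset.sum_congr rfl fun m _ => (mul_comm _ _).trans (hterm m), ← Finset.sum_div, hkey k.1 l.1]
      by_cases hkl : k = l
      · subst hkl
        rw [if_pos rfl, if_pos rfl, mul_one, ← Complex.ofReal_mul,
          Real.mul_self_sqrt (hμnn k.1)]
        exact div_self (by exact_mod_cast ne_of_gt k.2)
      · rw [if_neg (fun h => hkl (Subtype.ext h)), if_neg hkl, mul_zero, zero_div]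
    have hnorm : ∀ k : {k : Fin d // 0 < μ k}, ‖u k i‖ ^ 2 = w i k.1 := by
      intro k
      simp only [hu, PiLp.toLp_apply]
      rw [norm_div, norm_mul, Complex.norm_real, Complex.norm_real, Real.norm_eq_abs,
        Real.norm_eq_abs, abs_of_nonneg (Real.sqrt_nonneg _), abs_of_nonneg (Real.sqrt_nonneg _),
        norm_inner_symm]
      simp only [hw, hD, if_pos k.2]
      rw [div_pow, mul_pow, Real.sq_sqrt (hp i).le, Real.sq_sqrt (hμnn k.1)]
    calc ∑ k, w i k = ∑ k ∈ Finset.univ.filter (fun k => 0 < μ k), w i k := by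
          rw [Finset.sum_filter]
          refine Finset.sum_congr rfl fun k _ => ?_
          by_cases h : 0 < μ k
          · rw [if_pos h]
          · rw [if_neg h]; simp only [hw]; rw [if_neg h]
      _ = ∑ k : {k : Fin d // 0 < μ k}, w i k.1 :=
          Finset.sum_subtype _ (fun k => by simp) _
      _ = ∑ k : {k : Fin d // 0 < μ k}, ‖⟪u k, EuclideanSpace.single i (1:ℂ)⟫_ℂ‖ ^ 2 := by
          refine Finset.sum_congr rfl fun k _ => ?_
          rw [EuclideanSpace.inner_single_right, one_mul, RCLike.norm_conj, hnorm k]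
      _ ≤ ‖EuclideanSpace.single i (1:ℂ)‖ ^ 2 := horthu.sum_inner_products_le _
      _ = 1 := by rw [EuclideanSpace.norm_single]; norm_num
  have hpw : ∀ i, ∑ k, w i k * μ k = p i := fun i => by
    rw [Finset.sum_congr rfl fun k _ => hwμ i k, hpeq i]
  -- Jensen (non-strict) for each i
  have hjen : ∀ i, φ (p i) ≤ ∑ k, w i k * φ (μ k) := by
    intro i
    have h := (Real.convexOn_mul_log).map_add_sum_le (t := (Finset.univ : Finset (Fin d)))
      (w := w i) (p := μ) (q := (0:ℝ)) (v := 1 - ∑ k, w i k)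
      (fun k _ => hwnn i k) (by ring) (fun k _ => hμnn k) (by linarith [hbessel i])
      (Set.mem_Ici.mpr le_rfl)
    simp only [smul_eq_mul, mul_zero, Real.log_zero, zero_add, zero_mul, add_zero] at h
    rw [Finset.sum_congr rfl fun k _ => (hwμ i k), hpeq i] at h
    simpa [hφ] using h
  -- strict Jensen at i₀
  have hstrict : φ (p i₀) < ∑ k, w i₀ k * φ (μ k) := by
    set W : Option (Fin d) → ℝ := fun o => o.elim (1 - ∑ k, w i₀ k) (w i₀) with hW
    set X : Option (Fin d) → ℝ := fun o => o.elim 0 μ with hX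
    have hWnn : ∀ o, 0 ≤ W o := by
      rintro (_ | k)
      · simp only [hW, Option.elim]
        linarith [hbessel i₀]
      · exact hwnn i₀ k
    have hXnn : ∀ o, 0 ≤ X o := by
      rintro (_ | k)
      · exact le_refl 0
      · exact hμnn k
    have hWsum : ∑ o : Option (Fin d), W o = 1 := by
      rw [Fintype.sum_option]
      simp only [hW, Option.elim]
      ring
    set t : Finset (Option (Fin d)) := Finset.univ.filter (fun o => W o ≠ 0) with ht
    have htsum : ∑ o ∈ t, W o = 1 := by
      rw [ht, Finset.sum_filter_ne_zero]
      exact hWsum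
    have htmul : ∀ g : Option (Fin d) → ℝ, ∑ o ∈ t, W o * g o = ∑ o : Option (Fin d), W o * g o := by
      intro g
      exact Finset.sum_filter_of_ne (fun o _ h hW0 => h (by rw [hW0, zero_mul]))
    have hXp : ∑ o ∈ t, W o * X o = p i₀ := by
      rw [htmul X, Fintype.sum_option]
      simp only [hW, hX, Option.elim, id, mul_zero, zero_add]
      exact hpw i₀
    have hφX : ∑ o ∈ t, W o * φ (X o) = ∑ k, w i₀ k * φ (μ k) := by
      rw [htmul (fun o => φ (X o)), Fintype.sum_option]
      simp only [hW, hX, Option.elim, hφ, Real.log_zero, mul_zero, zero_mul, zero_add]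
    by_cases hex : ∃ a ∈ t, ∃ b ∈ t, X a ≠ X b
    · have h := Real.strictConvexOn_mul_log.map_sum_lt (t := t) (w := W) (p := X)
        (fun o ho => lt_of_le_of_ne (hWnn o) (Ne.symm (Finset.mem_filter.mp ho).2))
        htsum (fun o _ => Set.mem_Ici.mpr (hXnn o)) hex
      simp only [smul_eq_mul] at h
      rw [hXp, hφX] at h
      exact h
    · exfalso
      push_neg at hex
      have htne : t.Nonempty := by
        rcases Finset.eq_empty_or_nonempty t with h | h
        · rw [h, Finset.sum_empty] at htsum; norm_num at htsum
        · exact h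
      obtain ⟨o₀, ho₀⟩ := htne
      have hXconst : ∀ o ∈ t, X o = X o₀ := fun o ho => hex o ho o₀ ho₀
      have hXval : X o₀ = p i₀ := by
        have h1 : ∑ o ∈ t, W o * X o = X o₀ * ∑ o ∈ t, W o := by
          rw [Finset.mul_sum]
          refine Finset.sum_congr rfl fun o ho => ?_
          rw [hXconst o ho]; ring
        rw [htsum, mul_one] at h1
        rw [← h1, hXp]
      have heig : ∀ k, ⟪e k, v i₀⟫_ℂ ≠ 0 → μ k = p i₀ := by
        intro k hc
        have hD0 : 0 < D i₀ k := by
          simp only [hD]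
          exact mul_pos (hp i₀) (pow_pos (norm_pos_iff.mpr hc) 2)
        have hμk : 0 < μ k := lt_of_lt_of_le hD0 (hDle i₀ k)
        have hwk : w i₀ k ≠ 0 := by
          simp only [hw]; rw [if_pos hμk]
          exact ne_of_gt (div_pos hD0 hμk)
        have hmem : (some k) ∈ t := Finset.mem_filter.mpr
          ⟨Finset.mem_univ _, by simpa [hW] using hwk⟩
        have h2 := hXconst (some k) hmem
        rw [hXval] at h2
        simpa [hX] using h2
      have hvexp : ∀ a, v i₀ a = ∑ k, ⟪e k, v i₀⟫_ℂ * e k a := by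
        intro a
        have h3 := congr_arg (fun x : EuclideanSpace ℂ (Fin d) => x a) (e.sum_repr' (v i₀))
        simp only [WithLp.ofLp_sum, WithLp.ofLp_smul, Finset.sum_apply, Pi.smul_apply] at h3
        simpa [smul_eq_mul] using h3.symm
      have hμv : ∀ a, (ρ.mulVec (v i₀)) a = (p i₀ : ℂ) * v i₀ a := by
        intro a
        calc (ρ.mulVec (v i₀)) a = ∑ b, ρ a b * v i₀ b := rfl
          _ = ∑ b, ∑ k, ⟪e k, v i₀⟫_ℂ * (ρ a b * e k b) := by
              refine Finset.sum_congr rfl fun b _ => ?_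
              rw [hvexp b, Finset.mul_sum]
              refine Finset.sum_congr rfl fun k _ => by ring
          _ = ∑ k, ⟪e k, v i₀⟫_ℂ * ∑ b, ρ a b * e k b := by
              rw [Finset.sum_comm]
              refine Finset.sum_congr rfl fun k _ => (Finset.mul_sum _ _ _).symm
          _ = ∑ k, ⟪e k, v i₀⟫_ℂ * ((μ k : ℂ) * e k a) := by
              refine Finset.sum_congr rfl fun k _ => ?_
              rw [show ∑ b, ρ a b * e k b = (ρ.mulVec (e k)) a from rfl, heval k a]
          _ = ∑ k, ⟪e k, v i₀⟫_ℂ * ((p i₀ : ℂ) * e k a) := by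
              refine Finset.sum_congr rfl fun k _ => ?_
              by_cases hc : ⟪e k, v i₀⟫_ℂ = 0
              · rw [hc, zero_mul, zero_mul]
              · rw [heig k hc]
          _ = (p i₀ : ℂ) * v i₀ a := by
              rw [hvexp a, Finset.mul_sum]
              refine Finset.sum_congr rfl fun k _ => by ring
      have h := hform (v i₀) (v i₀)
      have hL : ∑ a, (starRingEnd ℂ) (v i₀ a) * (ρ.mulVec (v i₀)) a = (p i₀ : ℂ) := by
        rw [Finset.sum_congr rfl fun a _ => by rw [hμv a]]
        rw [show ∑ a, (starRingEnd ℂ) (v i₀ a) * ((p i₀:ℂ) * v i₀ a)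
            = (p i₀:ℂ) * ∑ a, (starRingEnd ℂ) (v i₀ a) * v i₀ a from by
          rw [Finset.mul_sum]; exact Finset.sum_congr rfl fun a _ => by ring]
        have h5 : ⟪v i₀, v i₀⟫_ℂ = ((1:ℝ):ℂ)^2 := by
          rw [inner_self_eq_norm_sq_to_K, hv i₀]; exact rfl
        rw [PiLp.inner_apply] at h5
        simp only [RCLike.inner_apply] at h5
        rw [show ∑ a, (starRingEnd ℂ) (v i₀ a) * v i₀ a = ∑ a, v i₀ a * (starRingEnd ℂ) (v i₀ a) from
          Finset.sum_congr rfl fun a _ => mul_comm _ _, h5]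
        norm_num
      rw [hL] at h
      have h6 : ∀ m, (p m : ℂ) * (⟪v m, v i₀⟫_ℂ * ⟪v i₀, v m⟫_ℂ)
          = ((p m * ‖⟪v i₀, v m⟫_ℂ‖^2 : ℝ) : ℂ) := by
        intro m
        rw [← inner_conj_symm (v m) (v i₀), RCLike.conj_mul]
        push_cast
        exact rfl
      rw [Finset.sum_congr rfl fun m _ => h6 m, ← Complex.ofReal_sum] at h
      have h7 : ∑ m, p m * ‖⟪v i₀, v m⟫_ℂ‖^2 = p i₀ := Complex.ofReal_injective h.symm
      have h8 : p i₀ * ‖⟪v i₀, v i₀⟫_ℂ‖^2 = p i₀ := by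
        rw [show ⟪v i₀, v i₀⟫_ℂ = ((1:ℝ):ℂ) from by
          rw [inner_self_eq_norm_sq_to_K, hv i₀]; norm_num]
        simp
      have h9 : ∑ m ∈ Finset.univ.erase i₀, p m * ‖⟪v i₀, v m⟫_ℂ‖^2 = 0 := by
        have h10 := Finset.add_sum_erase Finset.univ
          (fun m => p m * ‖⟪v i₀, v m⟫_ℂ‖^2) (Finset.mem_univ i₀)
        linarith [h7, h8]
      have h11 := (Finset.sum_eq_zero_iff_of_nonneg
        (fun m _ => mul_nonneg (hp m).le (sq_nonneg _))).mp h9 j₀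
        (Finset.mem_erase.mpr ⟨Ne.symm hij, Finset.mem_univ _⟩)
      have h12 : ‖⟪v i₀, v j₀⟫_ℂ‖^2 = 0 := by
        rcases mul_eq_zero.mp h11 with h | h
        · exact absurd h (ne_of_gt (hp j₀))
        · exact h
      exact hnon (norm_eq_zero.mp ((pow_eq_zero_iff (by norm_num : (2:ℕ) ≠ 0)).mp h12))
  -- assemble
  have hsum : ∑ i, φ (p i) < ∑ k, φ (μ k) := by
    have h1 : ∑ i, φ (p i) < ∑ i, ∑ k, w i k * φ (μ k) :=
      Finset.sum_lt_sum (fun i _ => hjen i) ⟨i₀, Finset.mem_univ i₀, hstrict⟩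
    have h2 : ∑ i, ∑ k, w i k * φ (μ k) = ∑ k, φ (μ k) := by
      rw [Finset.sum_comm]
      refine Finset.sum_congr rfl fun k _ => ?_
      rw [← Finset.sum_mul]
      rcases lt_or_eq_of_le (hμnn k) with hk | hk
      · rw [hcolw k hk, one_mul]
      · have hφ0 : φ (μ k) = 0 := by rw [← hk]; simp [hφ]
        rw [hφ0, mul_zero]
    linarith
  exact neg_lt_neg hsum
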